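/- Let U ⊆ O_K^{*,+} be an admissible subgroup. Then the action of U on (ℝ_{>0})^s given by u·(x₁,…,x_s) = (σ₁(u)x₁,…,σ_s(u)x_s) is properly discontinuous (for any compact subsets A, B ⊆ (ℝ_{>0})^s, only finitely many u ∈ U satisfy u(A) ∩ B ≠ ∅), and the quotient (ℝ_{>0})^s/U is compact. -/

import Mathlib

/-!
Setting: `K` is a number field with exactly `s ≥ 1` real embeddings
`σr 0, …, σr (s-1) : K →+* ℝ` and `2t ≥ 2` complex (non-real) embeddings, of which
`σc 0, …, σc (t-1) : K →+* ℂ` are pairwise non-conjugate representatives.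
-/

noncomputable section
open NumberField

/-- The subgroup `O_K^{*,+}` of totally positive units: units `u` of the ring of integers
with `σᵢ(u) > 0` for every real embedding `σᵢ`, `i = 1, …, s`. -/
def posUnits (K : Type) [Field K] [NumberField K] {s : ℕ}
    (σr : Fin s → (K →+* ℝ)) : Subgroup (𝓞 K)ˣ where
  carrier := {u | ∀ i, 0 < σr i ((u : 𝓞 K) : K)}
  mul_mem' := by
    intro a b ha hb i
    push_cast [map_mul]
    exact mul_pos (ha i) (hb i)
  one_mem' := by intro i; simp
  inv_mem' := by
    intro a ha i
    have h1 : σr i ((↑(a⁻¹ * a) : 𝓞 K) : K) = 1 := by simp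
    have h2 : σr i ((↑(a⁻¹) : 𝓞 K) : K) * σr i ((↑a : 𝓞 K) : K) = 1 := by
      rw [← h1]; push_cast [map_mul]; ring
    nlinarith [ha i, h2]

/-- A subset of `ℝⁿ` is a lattice if it is discrete and its `ℝ`-linear span is all of `ℝⁿ`. -/
def IsLatticeSet {n : ℕ} (S : Set (Fin n → ℝ)) : Prop :=
  DiscreteTopology S ∧ Submodule.span ℝ S = ⊤

/-- The projection of the logarithmic embedding `l` to the first `s` coordinates:
`u ↦ (log |σ₁(u)|, …, log |σ_s(u)|)`. -/
def projLog {K : Type} [Field K] [NumberField K] {s : ℕ}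
    (σr : Fin s → (K →+* ℝ)) (u : (𝓞 K)ˣ) : Fin s → ℝ :=
  fun i => Real.log |σr i ((u : 𝓞 K) : K)|

/-- The logarithmic embedding
`l(u) = (log|σ₁(u)|, …, log|σ_s(u)|, 2 log|σ_{s+1}(u)|, …, 2 log|σ_{s+t}(u)|)`. -/
def logEmb {K : Type} [Field K] [NumberField K] {s t : ℕ}
    (σr : Fin s → (K →+* ℝ)) (σc : Fin t → (K →+* ℂ)) (u : (𝓞 K)ˣ) :
    Fin (s + t) → ℝ :=
  Fin.append (fun i => Real.log |σr i ((u : 𝓞 K) : K)|)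
    (fun j => 2 * Real.log ‖σc j ((u : 𝓞 K) : K)‖)

/-- A subgroup `U ⊆ O_K^{*,+}` is admissible if it is free abelian of rank `s` and the
projection of `l(U)` to the first `s` coordinates is a lattice in `ℝˢ`. -/
def Admissible {K : Type} [Field K] [NumberField K] {s : ℕ}
    (σr : Fin s → (K →+* ℝ)) (U : Subgroup (𝓞 K)ˣ) : Prop :=
  U ≤ posUnits K σr ∧ Nonempty (U ≃* Multiplicative (Fin s → ℤ)) ∧
    IsLatticeSet (projLog σr '' (U : Set (𝓞 K)ˣ))

/-- The affine action of a pair `(u, a) ∈ O_K^{*,+} ⋉ O_K` on `ℂˢ × ℂᵗ`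
(restricting to `ℍˢ × ℂᵗ`): `(u,a)·z = (σᵢ(u) zᵢ + σᵢ(a))ᵢ`. -/
def otAct {K : Type} [Field K] [NumberField K] {s t : ℕ}
    (σr : Fin s → (K →+* ℝ)) (σc : Fin t → (K →+* ℂ))
    (g : (𝓞 K)ˣ × 𝓞 K) (z : (Fin s → ℂ) × (Fin t → ℂ)) :
    (Fin s → ℂ) × (Fin t → ℂ) :=
  (fun i => (σr i ((g.1 : 𝓞 K) : K) : ℂ) * z.1 i + (σr i (g.2 : K) : ℂ),
   fun j => σc j ((g.1 : 𝓞 K) : K) * z.2 j + σc j (g.2 : K))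

/-- The hyperplane `L = {x ∈ ℝᵐ : ∑ xᵢ = 0}` as a submodule of `ℝᵐ`. -/
def sumZero (m : ℕ) : Submodule ℝ (Fin m → ℝ) where
  carrier := {x | ∑ i, x i = 0}
  add_mem' := by intro a b ha hb; simp_all [Finset.sum_add_distrib]
  zero_mem' := by simp
  smul_mem' := by intro c x hx; simp_all [← Finset.mul_sum]

section Aux

variable {K : Type} [Field K] [NumberField K] {s : ℕ} (σr : Fin s → (K →+* ℝ))

lemma sigmaUnit_mul_inv (u : (𝓞 K)ˣ) (i : Fin s) :
    σr i ((↑(u⁻¹) : 𝓞 K) : K) * σr i ((↑u : 𝓞 K) : K) = 1 := by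
  have h1 : σr i ((↑(u⁻¹ * u) : 𝓞 K) : K) = 1 := by simp
  rw [← h1]; push_cast [map_mul]; rfl

lemma sigmaUnit_ne_zero (u : (𝓞 K)ˣ) (i : Fin s) : σr i ((↑u : 𝓞 K) : K) ≠ 0 := by
  intro h
  have h2 := sigmaUnit_mul_inv σr u i
  rw [h, mul_zero] at h2
  exact zero_ne_one h2

lemma projLog_mul (u v : (𝓞 K)ˣ) :
    projLog σr (u * v) = projLog σr u + projLog σr v := by
  funext i
  have h : σr i ((↑(u * v) : 𝓞 K) : K)
      = σr i ((↑u : 𝓞 K) : K) * σr i ((↑v : 𝓞 K) : K) := by push_cast [map_mul]; rfl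
  simp only [projLog, Pi.add_apply, h, abs_mul]
  exact Real.log_mul (abs_ne_zero.2 (sigmaUnit_ne_zero σr u i))
    (abs_ne_zero.2 (sigmaUnit_ne_zero σr v i))

lemma projLog_one : projLog σr (1 : (𝓞 K)ˣ) = 0 := by
  funext i; simp [projLog]

lemma projLog_inv (u : (𝓞 K)ˣ) : projLog σr u⁻¹ = - projLog σr u := by
  have h := projLog_mul σr u u⁻¹
  rw [mul_inv_cancel, projLog_one] at h
  exact (neg_eq_of_add_eq_zero_right h.symm).symm

/-- The image of `U` under `projLog` as an additive subgroup of `ℝˢ`. -/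
def projLogGroup (U : Subgroup (𝓞 K)ˣ) : AddSubgroup (Fin s → ℝ) where
  carrier := projLog σr '' (U : Set (𝓞 K)ˣ)
  zero_mem' := ⟨1, U.one_mem, projLog_one σr⟩
  add_mem' := by
    rintro _ _ ⟨u, hu, rfl⟩ ⟨v, hv, rfl⟩
    exact ⟨u * v, U.mul_mem hu hv, projLog_mul σr u v⟩
  neg_mem' := by
    rintro _ ⟨u, hu, rfl⟩
    exact ⟨u⁻¹, U.inv_mem hu, projLog_inv σr u⟩

end Aux

/-- Let `U ⊆ O_K^{*,+}` be admissible. The action of `U` on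
`(ℝ_{>0})ˢ` by `u·x = (σᵢ(u) xᵢ)ᵢ` is properly discontinuous, and the quotient
`(ℝ_{>0})ˢ/U` is compact. -/
theorem posOrthant_action_properlyDiscontinuous_cocompact
    (K : Type) [Field K] [NumberField K] (s t : ℕ) (hs : 1 ≤ s) (ht : 1 ≤ t)
    (σr : Fin s → (K →+* ℝ)) (hσr : Function.Bijective σr)
    (hcard : Nat.card {φ : K →+* ℂ // ¬ ComplexEmbedding.IsReal φ} = 2 * t)
    (U : Subgroup (𝓞 K)ˣ) (hU : Admissible σr U) :
    (∀ A B : Set (Fin s → ℝ), IsCompact A → IsCompact B →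
      A ⊆ {x | ∀ i, 0 < x i} → B ⊆ {x | ∀ i, 0 < x i} →
      {u : (𝓞 K)ˣ | u ∈ U ∧
        (((fun x : Fin s → ℝ => fun i => σr i ((u : 𝓞 K) : K) * x i) '' A) ∩ B).Nonempty}.Finite) ∧
    CompactSpace (Quot fun x y : {x : Fin s → ℝ // ∀ i, 0 < x i} =>
      ∃ u ∈ U, ∀ i, σr i ((u : 𝓞 K) : K) * x.val i = y.val i) := by
  obtain ⟨hUpos, ⟨e⟩, hdisc, hspan⟩ := hU
  -- the lattice L = projLog '' U as a ℤ-submodule of ℝ^s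
  set L : Submodule ℤ (Fin s → ℝ) := (projLogGroup σr U).toIntSubmodule with hLdef
  have hLset : (L : Set (Fin s → ℝ)) = projLog σr '' (U : Set (𝓞 K)ˣ) := rfl
  haveI hdL : DiscreteTopology L := hdisc
  haveI : IsZLattice ℝ L := ⟨by rw [hLset]; exact hspan⟩
  haveI : Module.Free ℤ L := ZLattice.module_free ℝ L
  haveI : Module.Finite ℤ L := ZLattice.module_finite ℝ L
  -- the homomorphism g : ℤ^s → ℝ^s induced by projLog and the isomorphism e
  let g : (Fin s → ℤ) →+ (Fin s → ℝ) := AddMonoidHom.mk'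
    (fun n => projLog σr ((e.symm (Multiplicative.ofAdd n) : U) : (𝓞 K)ˣ))
    (by
      intro n m
      rw [ofAdd_add, map_mul]
      exact projLog_mul σr _ _)
  have hkey : ∀ u (hu : u ∈ U), projLog σr u = g (Multiplicative.toAdd (e ⟨u, hu⟩)) := by
    intro u hu
    show projLog σr u
      = projLog σr ((e.symm (Multiplicative.ofAdd (Multiplicative.toAdd (e ⟨u, hu⟩))) : U) : (𝓞 K)ˣ)
    rw [ofAdd_toAdd, MulEquiv.symm_apply_apply]
  -- the ℝ-linear extension G of g
  let M : Matrix (Fin s) (Fin s) ℝ := Matrix.of fun i j => g (Pi.single j 1) i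
  let G : (Fin s → ℝ) →ₗ[ℝ] (Fin s → ℝ) := Matrix.toLin' M
  have hGg : ∀ n : Fin s → ℤ, G (fun j => (n j : ℝ)) = g n := by
    intro n
    have hn : n = ∑ j, n j • Pi.single j (1 : ℤ) := by
      conv_lhs => rw [← Finset.univ_sum_single n]
      refine Finset.sum_congr rfl fun j _ => ?_
      rw [← Pi.single_smul, smul_eq_mul, mul_one]
    funext i
    have hG : G (fun j => (n j : ℝ)) i = ∑ j, g (Pi.single j 1) i * (n j : ℝ) := by
      simp [G, M, Matrix.toLin'_apply, Matrix.mulVec, dotProduct]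
    have hg : g n i = ∑ j, (n j : ℝ) * g (Pi.single j 1) i := by
      conv_lhs => rw [hn]
      rw [map_sum, Finset.sum_apply]
      refine Finset.sum_congr rfl fun j _ => ?_
      rw [map_zsmul, Pi.smul_apply, zsmul_eq_mul]
    rw [hG, hg]
    exact Finset.sum_congr rfl fun j _ => mul_comm _ _
  have hGsurj : Function.Surjective G := by
    rw [← LinearMap.range_eq_top, ← top_le_iff, ← hspan, Submodule.span_le]
    rintro _ ⟨u, hu, rfl⟩
    rw [hkey u hu, ← hGg]
    exact LinearMap.mem_range_self G _
  have hGinj : Function.Injective G := LinearMap.injective_iff_surjective.2 hGsurj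
  have hinj : Set.InjOn (projLog σr) (U : Set (𝓞 K)ˣ) := by
    intro u hu v hv huv
    have h1 : G (fun j => ((Multiplicative.toAdd (e ⟨u, hu⟩)) j : ℝ))
        = G (fun j => ((Multiplicative.toAdd (e ⟨v, hv⟩)) j : ℝ)) := by
      rw [hGg, hGg, ← hkey u hu, ← hkey v hv, huv]
    have h2 := hGinj h1
    have h3 : Multiplicative.toAdd (e ⟨u, hu⟩) = Multiplicative.toAdd (e ⟨v, hv⟩) := by
      funext j; exact_mod_cast congrFun h2 j
    have h4 : (⟨u, hu⟩ : U) = ⟨v, hv⟩ := e.injective (Multiplicative.toAdd.injective h3)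
    exact Subtype.ext_iff.1 h4
  constructor
  · -- proper discontinuity
    intro A B hA hB hApos hBpos
    set T : Set (Fin s → ℝ) :=
      (fun p : (Fin s → ℝ) × (Fin s → ℝ) => fun i => Real.log (p.2 i) - Real.log (p.1 i))
        '' (A ×ˢ B) with hTdef
    have hTc : IsCompact T := by
      refine (hA.prod hB).image_of_continuousOn (continuousOn_of_forall_continuousAt fun p hp => ?_)
      refine continuousAt_pi.2 fun i => ?_
      have h1 : p.1 i ≠ 0 := ne_of_gt ((hApos hp.1) i)
      have h2 : p.2 i ≠ 0 := ne_of_gt ((hBpos hp.2) i)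
      exact ((Real.continuousAt_log h2).comp (x := p)
          (((continuous_apply i).comp continuous_snd).continuousAt)).sub
        ((Real.continuousAt_log h1).comp (x := p)
          (((continuous_apply i).comp continuous_fst).continuousAt))
    haveI : DiscreteTopology ((projLogGroup σr U : AddSubgroup (Fin s → ℝ)) : Set (Fin s → ℝ)) :=
      hdisc
    have hclosed : IsClosed ((projLogGroup σr U : AddSubgroup (Fin s → ℝ)) : Set (Fin s → ℝ)) :=
      AddSubgroup.isClosed_of_discrete
    have hfin : (T ∩ (projLog σr '' (U : Set (𝓞 K)ˣ))).Finite := by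
      have hcomp : IsCompact (T ∩ (projLog σr '' (U : Set (𝓞 K)ˣ))) := hTc.inter_right hclosed
      haveI : DiscreteTopology ↥(T ∩ (projLog σr '' (U : Set (𝓞 K)ˣ))) :=
        DiscreteTopology.of_subset hdisc Set.inter_subset_right
      exact hcomp.finite (isDiscrete_iff_discreteTopology.mpr ‹_›)
    refine Set.Finite.of_finite_image (hfin.subset ?_) (hinj.mono fun u hu => hu.1)
    rintro _ ⟨u, ⟨huU, y, ⟨⟨x, hxA, rfl⟩, hyB⟩⟩, rfl⟩
    refine ⟨⟨(x, fun i => σr i ((u : 𝓞 K) : K) * x i), ⟨hxA, hyB⟩, ?_⟩, ⟨u, huU, rfl⟩⟩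
    funext i
    have hσ : 0 < σr i ((u : 𝓞 K) : K) := hUpos huU i
    show Real.log (σr i ((u : 𝓞 K) : K) * x i) - Real.log (x i) = projLog σr u i
    rw [Real.log_mul (ne_of_gt hσ) (ne_of_gt (hApos hxA i))]
    simp [projLog, abs_of_pos hσ]
  · -- cocompactness
    let b := (Module.Free.chooseBasis ℤ L).ofZLatticeBasis ℝ L
    have hDb : Bornology.IsBounded (ZSpan.fundamentalDomain b) :=
      ZSpan.fundamentalDomain_isBounded b
    have hCc : IsCompact (closure (ZSpan.fundamentalDomain b)) :=
      Metric.isCompact_of_isClosed_isBounded isClosed_closure hDb.closure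
    refine ⟨?_⟩
    have hfc : Continuous fun v : Fin s → ℝ =>
        Quot.mk (fun x y : {x : Fin s → ℝ // ∀ i, 0 < x i} =>
            ∃ u ∈ U, ∀ i, σr i ((u : 𝓞 K) : K) * x.val i = y.val i)
          ⟨fun i => Real.exp (v i), fun i => Real.exp_pos _⟩ :=
      continuous_quot_mk.comp (Continuous.subtype_mk
        (continuous_pi fun i => Real.continuous_exp.comp (continuous_apply i)) _)
    have huniv : (Set.univ : Set (Quot fun x y : {x : Fin s → ℝ // ∀ i, 0 < x i} =>
          ∃ u ∈ U, ∀ i, σr i ((u : 𝓞 K) : K) * x.val i = y.val i))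
        = (fun v : Fin s → ℝ =>
            Quot.mk _ ⟨fun i => Real.exp (v i), fun i => Real.exp_pos _⟩)
          '' closure (ZSpan.fundamentalDomain b) := by
      refine Set.eq_of_subset_of_subset (fun q _ => ?_) (Set.subset_univ _)
      obtain ⟨x, rfl⟩ := Quot.exists_rep q
      set v : Fin s → ℝ := fun i => Real.log (x.val i) with hv
      obtain ⟨⟨l, hlmem⟩, hl, -⟩ := ZSpan.exist_unique_vadd_mem_fundamentalDomain b v
      have hlL : l ∈ L := by
        rw [← (Module.Free.chooseBasis ℤ L).ofZLatticeBasis_span ℝ]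
        exact hlmem
      obtain ⟨u, huU, hul⟩ : ∃ u ∈ U, projLog σr u = l := hlL
      have hcD : l + v ∈ ZSpan.fundamentalDomain b := hl
      refine ⟨l + v, subset_closure hcD, ?_⟩
      refine Quot.sound ⟨u⁻¹, U.inv_mem huU, fun i => ?_⟩
      have hσ : 0 < σr i ((u : 𝓞 K) : K) := hUpos huU i
      have hli : l i = Real.log (σr i ((u : 𝓞 K) : K)) := by
        rw [← hul]; simp [projLog, abs_of_pos hσ]
      show σr i ((↑(u⁻¹) : 𝓞 K) : K) * Real.exp ((l + v) i) = x.val i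
      rw [Pi.add_apply, Real.exp_add, hli, Real.exp_log hσ, Real.exp_log (x.2 i),
        ← mul_assoc, sigmaUnit_mul_inv σr u i, one_mul]
    rw [huniv]
    exact hCc.image hfc

end
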